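/- Let 0 = w_0 < w_1 < ⋯ < w_s ≤ n be integers and let C be the clique {0, v_1/2, …, v_s/2} in the Cayley graph on (1/2)A_n^# with generators (1/2)p_H(V_0), where v_i = p_H(1^{w_i} 0^{n+1−w_i}). Then the closed neighborhood of C has cardinality (s+1)·2^{n+1} − (Σ_{i=1}^s 2^{n+1−(w_i−w_{i−1})} + 2^{w_s}), and hence |C|/|N[C]| ≤ 1/2ⁿ. -/

import Mathlib

open Set Filter MeasureTheory Pointwise

/-- The hyperplane `H = {x ∈ ℝ^{n+1} : ∑ xᵢ = 0}`. -/
def Hset (n : ℕ) : Set (Fin (n + 1) → ℝ) := {x | ∑ i, x i = 0}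

/-- The root lattice `Aₙ = ℤ^{n+1} ∩ H`. -/
def Alat (n : ℕ) : Set (Fin (n + 1) → ℝ) :=
  {x | (∀ i, ∃ m : ℤ, x i = (m : ℝ)) ∧ ∑ i, x i = 0}

/-- The Voronoï region of `Aₙ` inside `H`. -/
def VorAn (n : ℕ) : Set (Fin (n + 1) → ℝ) :=
  {z | z ∈ Hset n ∧ ∀ x ∈ Alat n, ∑ i, (z i) ^ 2 ≤ ∑ i, (z i - x i) ^ 2}

/-- Orthogonal projection of `ℝ^{n+1}` onto the hyperplane `H`. -/
noncomputable def pH (n : ℕ) (u : Fin (n + 1) → ℝ) : Fin (n + 1) → ℝ :=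
  fun i => u i - (∑ j, u j) / (n + 1)

/-- `V₀ = {0,1}^{n+1} \ {0, (1,…,1)}`. -/
def V0set (n : ℕ) : Set (Fin (n + 1) → ℝ) :=
  {u | (∀ i, u i = 0 ∨ u i = 1) ∧ u ≠ 0 ∧ u ≠ fun _ => 1}

/-- The vertex set of the Voronoï region of `Aₙ`. -/
noncomputable def VPAn (n : ℕ) : Set (Fin (n + 1) → ℝ) := pH n '' V0set n

/-- The 0-1 vector with `w` leading ones. -/
def uvec (n : ℕ) (w : ℕ) : Fin (n + 1) → ℝ := fun j => if (j : ℕ) < w then 1 else 0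


namespace CliqueAux

variable {n : ℕ}






/-- Box finset: all integer vectors with `r q ∈ {c q, c q + 1}`. -/
def Bx (c : Fin n → ℤ) : Finset (Fin n → ℤ) :=
  Fintype.piFinset fun q => {c q, c q + 1}

lemma mem_Bx {c r : Fin n → ℤ} : r ∈ Bx c ↔ ∀ q, r q = c q ∨ r q = c q + 1 := by
  simp [Bx, Fintype.mem_piFinset]

lemma card_Bx (c : Fin n → ℤ) : (Bx c).card = 2 ^ n := by
  rw [Bx, Fintype.card_piFinset]
  have : ∀ q : Fin n, ({c q, c q + 1} : Finset ℤ).card = 2 := by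
    intro q; rw [Finset.card_pair (by omega)]
  simp [this]

lemma Bx_inter (c c' : Fin n → ℤ) :
    Bx c ∩ Bx c' = Fintype.piFinset fun q => ({c q, c q + 1} ∩ {c' q, c' q + 1} : Finset ℤ) := by
  ext r; simp [Bx, Fintype.mem_piFinset, forall_and]

lemma card_Bx_inter (c c' : Fin n → ℤ) (h : ∀ q, c q ≤ c' q ∧ c' q ≤ c q + 1) :
    (Bx c ∩ Bx c').card = 2 ^ (Finset.univ.filter fun q => c q = c' q).card := by
  rw [Bx_inter, Fintype.card_piFinset]
  have hcard : ∀ q : Fin n, (({c q, c q + 1} ∩ {c' q, c' q + 1} : Finset ℤ)).card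
      = if c q = c' q then 2 else 1 := by
    intro q
    rcases eq_or_ne (c q) (c' q) with he | he
    · rw [if_pos he, he, Finset.inter_self, Finset.card_pair (by omega)]
    · have h2 : c' q = c q + 1 := by rcases h q with ⟨h1, h2⟩; omega
      rw [if_neg he]
      have : ({c q, c q + 1} ∩ {c' q, c' q + 1} : Finset ℤ) = {c q + 1} := by
        ext x
        simp only [Finset.mem_inter, Finset.mem_insert, Finset.mem_singleton, h2]
        omega
      rw [this, Finset.card_singleton]
  calc (∏ q, (({c q, c q + 1} ∩ {c' q, c' q + 1} : Finset ℤ)).card)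
      = ∏ q, (if c q = c' q then 2 else 1) := by
        exact Finset.prod_congr rfl fun q _ => hcard q
    _ = 2 ^ (Finset.univ.filter fun q => c q = c' q).card := by
        rw [Finset.prod_ite, Finset.prod_const, Finset.prod_const, one_pow, mul_one]

lemma Bx_between {c c' c'' : Fin n → ℤ} (h1 : ∀ q, c q ≤ c' q) (h2 : ∀ q, c' q ≤ c'' q)
    (h3 : ∀ q, c'' q ≤ c q + 1) : Bx c ∩ Bx c'' ⊆ Bx c' := by
  intro r hr
  rw [Finset.mem_inter, mem_Bx, mem_Bx] at hr
  rw [mem_Bx]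
  intro q
  have := hr.1 q; have := hr.2 q; have := h1 q; have := h2 q; have := h3 q
  omega

/-- Telescoping union cardinality for a chain of boxes. -/
lemma chain_card (c : ℕ → Fin n → ℤ) (k : ℕ)
    (hmono : ∀ a b, 1 ≤ a → a ≤ b → b ≤ k → ∀ q, c a q ≤ c b q ∧ c b q ≤ c a q + 1) :
    ((Finset.Icc 1 k).biUnion fun j => Bx (c j)).card
      + ∑ j ∈ Finset.Ico 1 k, (Bx (c j) ∩ Bx (c (j+1))).card = k * 2 ^ n := by
  induction k with
  | zero => simp
  | succ k ih =>
    rcases Nat.eq_zero_or_pos k with rfl | hk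
    · simp [card_Bx]
    have hIcc : Finset.Icc 1 (k+1) = insert (k+1) (Finset.Icc 1 k) := by
      ext x; simp only [Finset.mem_Icc, Finset.mem_insert]; omega
    have hIco : Finset.Ico 1 (k+1) = insert k (Finset.Ico 1 k) := by
      ext x; simp only [Finset.mem_Ico, Finset.mem_insert]; omega
    set U : Finset (Fin n → ℤ) := (Finset.Icc 1 k).biUnion fun j => Bx (c j) with hU
    have hsplit : ((Finset.Icc 1 (k+1)).biUnion fun j => Bx (c j)) = Bx (c (k+1)) ∪ U := by
      rw [hIcc, Finset.biUnion_insert]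
    have hinter : Bx (c (k+1)) ∩ U = Bx (c k) ∩ Bx (c (k+1)) := by
      apply Finset.Subset.antisymm
      · intro r hr
        rw [Finset.mem_inter] at hr
        obtain ⟨a, ha, hra⟩ := Finset.mem_biUnion.1 hr.2
        rw [Finset.mem_Icc] at ha
        rw [Finset.mem_inter]
        constructor
        · have : Bx (c a) ∩ Bx (c (k+1)) ⊆ Bx (c k) := by
            apply Bx_between (fun q => (hmono a k ha.1 ha.2 (by omega) q).1)
              (fun q => (hmono k (k+1) (by omega) (by omega) (by omega) q).1)
              (fun q => (hmono a (k+1) ha.1 (by omega) (by omega) q).2)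
          exact this (Finset.mem_inter.2 ⟨hra, hr.1⟩)
        · exact hr.1
      · intro r hr
        rw [Finset.mem_inter] at hr
        rw [Finset.mem_inter]
        refine ⟨hr.2, Finset.mem_biUnion.2 ⟨k, Finset.mem_Icc.2 ⟨hk, le_refl k⟩, hr.1⟩⟩
    have hcard := Finset.card_union_add_card_inter (Bx (c (k+1))) U
    rw [hinter] at hcard
    have ihh := ih (fun a b h1 h2 h3 q => hmono a b h1 h2 (by omega) q)
    rw [hsplit, hIco, Finset.sum_insert (by simp)]
    rw [card_Bx] at hcard
    have hring : (k+1+1) * 2 ^ n = (k+1) * 2 ^ n + 2 ^ n := by ring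
    have hring2 : (k+1) * 2 ^ n = k * 2 ^ n + 2 ^ n := by ring
    omega





def cf (n m : ℕ) : Fin n → ℤ := fun q => if (q : ℕ) + 1 < m then 0 else -1

lemma cf_mono {m m' : ℕ} (h : m ≤ m') (q : Fin n) :
    cf n m q ≤ cf n m' q ∧ cf n m' q ≤ cf n m q + 1 := by
  simp only [cf]; split_ifs <;> omega

lemma card_filter_val_lt (a : ℕ) (ha : a ≤ n) :
    (Finset.univ.filter fun q : Fin n => (q : ℕ) < a).card = a := by
  have h := Finset.card_bij (s := Finset.univ.filter fun q : Fin n => (q : ℕ) < a)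
    (t := Finset.range a) (fun q _ => (q : ℕ))
    (fun q hq => by simp only [Finset.mem_filter] at hq; simp [hq.2])
    (fun q1 _ q2 _ h => Fin.val_injective h)
    (fun x hx => by
      simp only [Finset.mem_range] at hx
      exact ⟨⟨x, by omega⟩, by simp [hx], rfl⟩)
  rw [h, Finset.card_range]

lemma cf_eq_count (m m' : ℕ) (h1 : 1 ≤ m) (hmm' : m ≤ m') (h2 : m' ≤ n + 1) :
    (Finset.univ.filter fun q : Fin n => cf n m q = cf n m' q).card = n - (m' - m) := by
  have htot := Finset.card_filter_add_card_filter_not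
    (s := (Finset.univ : Finset (Fin n))) (p := fun q : Fin n => cf n m q = cf n m' q)
  have hne : (Finset.univ.filter fun q : Fin n => ¬(cf n m q = cf n m' q)) =
      (Finset.univ.filter fun q : Fin n => (q : ℕ) < m' - 1) \
      (Finset.univ.filter fun q : Fin n => (q : ℕ) < m - 1) := by
    ext q
    simp only [Finset.mem_filter, Finset.mem_sdiff, Finset.mem_univ, true_and]
    simp only [cf]
    split_ifs <;> simp <;> omega
  have hsub : (Finset.univ.filter fun q : Fin n => (q : ℕ) < m - 1) ⊆
      (Finset.univ.filter fun q : Fin n => (q : ℕ) < m' - 1) := by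
    intro q hq
    simp only [Finset.mem_filter, Finset.mem_univ, true_and] at hq ⊢
    omega
  have hcard : (Finset.univ.filter fun q : Fin n => ¬(cf n m q = cf n m' q)).card
      = (m' - 1) - (m - 1) := by
    rw [hne, Finset.card_sdiff_of_subset hsub, card_filter_val_lt (m' - 1) (by omega),
      card_filter_val_lt (m - 1) (by omega)]
  rw [Finset.card_univ, Fintype.card_fin] at htot
  omega

lemma cf_neg_count (m : ℕ) (h1 : 1 ≤ m) (h2 : m ≤ n + 1) :
    (Finset.univ.filter fun q : Fin n => cf n m q = -1).card = n + 1 - m := by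
  have hne : (Finset.univ.filter fun q : Fin n => cf n m q = -1) =
      Finset.univ \ (Finset.univ.filter fun q : Fin n => (q : ℕ) < m - 1) := by
    ext q
    simp only [Finset.mem_filter, Finset.mem_sdiff, Finset.mem_univ, true_and]
    simp only [cf]
    split_ifs <;> simp <;> omega
  rw [hne, Finset.card_sdiff_of_subset (Finset.filter_subset _ _), Finset.card_univ, Fintype.card_fin,
    card_filter_val_lt (m - 1) (by omega)]
  omega


lemma count_main (n s : ℕ) (w : ℕ → ℕ) (h0 : w 0 = 0)
    (hmono : ∀ i, i < s → w i < w (i + 1)) (hws : w s ≤ n) :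
    ((((Finset.Icc 1 (s+1)).biUnion fun k =>
        Bx (cf n (if k ≤ s then w k else n + 1)) ∪
        Bx (fun q => cf n (if k ≤ s then w k else n + 1) q - 1)).card : ℤ))
      = ((s : ℤ) + 1) * 2 ^ (n + 1)
        - ((∑ i ∈ Finset.Icc 1 s, (2 : ℤ) ^ (n + 1 - (w i - w (i - 1)))) + 2 ^ (w s)) := by
  set M : ℕ → ℕ := fun k => if k ≤ s then w k else n + 1 with hM
  -- monotonicity of w
  have key : ∀ d a, a + d ≤ s → w a ≤ w (a + d) := by
    intro d
    induction d with
    | zero => intro a _; simp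
    | succ d ih =>
      intro a h
      have h1 := ih a (by omega)
      have h2 := hmono (a + d) (by omega)
      have hh : a + (d + 1) = (a + d) + 1 := by omega
      rw [hh]; omega
  have wm : ∀ a b, a ≤ b → b ≤ s → w a ≤ w b := by
    intro a b hab hbs
    have := key (b - a) a (by omega)
    have hh : a + (b - a) = b := by omega
    rwa [hh] at this
  have w1pos : 1 ≤ s → 1 ≤ w 1 := by
    intro hs; have h2 := hmono 0 (by omega); norm_num at h2; omega
  have M1 : ∀ k, 1 ≤ k → 1 ≤ M k := by
    intro k hk; simp only [hM]
    split_ifs with h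
    · exact le_trans (w1pos (by omega)) (wm 1 k hk h)
    · omega
  have Mle : ∀ k, M k ≤ n + 1 := by
    intro k; simp only [hM]; split_ifs with h
    · exact le_trans (wm k s h le_rfl) (by omega)
    · omega
  have Mmono : ∀ a b, a ≤ b → M a ≤ M b := by
    intro a b hab; simp only [hM]; split_ifs with h1 h2 h2
    · exact wm a b hab h2
    · exact le_trans (wm a s h1 le_rfl) (by omega)
    · omega
    · omega
  -- chains
  have hchainA : ∀ a b, 1 ≤ a → a ≤ b → b ≤ s + 1 →
      ∀ q : Fin n, cf n (M a) q ≤ cf n (M b) q ∧ cf n (M b) q ≤ cf n (M a) q + 1 :=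
    fun a b _ hab _ q => cf_mono (Mmono a b hab) q
  have hA := chain_card (fun k => cf n (M k)) (s+1) (fun a b h1 h2 h3 => hchainA a b h1 h2 h3)
  have hB := chain_card (fun k => fun q => cf n (M k) q - 1) (s+1)
    (fun a b h1 h2 h3 q => by have := hchainA a b h1 h2 h3 q; constructor <;> omega)
  -- intersection term values
  have hIA : ∀ j, 1 ≤ j → j + 1 ≤ s + 1 →
      (Bx (cf n (M j)) ∩ Bx (cf n (M (j+1)))).card = 2 ^ (n - (M (j+1) - M j)) := by
    intro j hj hj1
    rw [card_Bx_inter _ _ (fun q => cf_mono (Mmono j (j+1) (by omega)) q),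
      cf_eq_count (M j) (M (j+1)) (M1 j hj) (Mmono j (j+1) (by omega)) (Mle (j+1))]
  have hIB : ∀ j, 1 ≤ j → j + 1 ≤ s + 1 →
      (Bx (fun q => cf n (M j) q - 1) ∩ Bx (fun q => cf n (M (j+1)) q - 1)).card
        = 2 ^ (n - (M (j+1) - M j)) := by
    intro j hj hj1
    rw [card_Bx_inter _ _ (fun q => by
      have := cf_mono (n := n) (Mmono j (j+1) (by omega)) q; constructor <;> omega)]
    have hfe : (Finset.univ.filter fun q : Fin n => cf n (M j) q - 1 = cf n (M (j+1)) q - 1)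
        = Finset.univ.filter fun q : Fin n => cf n (M j) q = cf n (M (j+1)) q := by
      apply Finset.filter_congr; intro q _; constructor <;> intro h <;> omega
    rw [hfe, cf_eq_count (M j) (M (j+1)) (M1 j hj) (Mmono j (j+1) (by omega)) (Mle (j+1))]
  -- sums
  have hsumA : ∑ j ∈ Finset.Ico 1 (s+1), (Bx (cf n (M j)) ∩ Bx (cf n (M (j+1)))).card
      = ∑ j ∈ Finset.Ico 1 (s+1), 2 ^ (n - (M (j+1) - M j)) := by
    apply Finset.sum_congr rfl; intro j hj
    rw [Finset.mem_Ico] at hj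
    exact hIA j hj.1 (by omega)
  have hsumB : ∑ j ∈ Finset.Ico 1 (s+1),
      (Bx (fun q => cf n (M j) q - 1) ∩ Bx (fun q => cf n (M (j+1)) q - 1)).card
      = ∑ j ∈ Finset.Ico 1 (s+1), 2 ^ (n - (M (j+1) - M j)) := by
    apply Finset.sum_congr rfl; intro j hj
    rw [Finset.mem_Ico] at hj
    exact hIB j hj.1 (by omega)
  set SA : ℕ := ∑ j ∈ Finset.Ico 1 (s+1), 2 ^ (n - (M (j+1) - M j)) with hSA
  set Af : Finset (Fin n → ℤ) := (Finset.Icc 1 (s+1)).biUnion fun k => Bx (cf n (M k)) with hAf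
  set Bf : Finset (Fin n → ℤ) :=
    (Finset.Icc 1 (s+1)).biUnion fun k => Bx (fun q => cf n (M k) q - 1) with hBf
  rw [hsumA] at hA
  rw [hsumB] at hB
  -- the union is Af ∪ Bf
  have hUAB : ((Finset.Icc 1 (s+1)).biUnion fun k =>
      Bx (cf n (M k)) ∪ Bx (fun q => cf n (M k) q - 1)) = Af ∪ Bf := by
    ext r
    simp only [hAf, hBf, Finset.mem_biUnion, Finset.mem_union]
    constructor
    · rintro ⟨k, hk, hrk | hrk⟩
      · exact Or.inl ⟨k, hk, hrk⟩
      · exact Or.inr ⟨k, hk, hrk⟩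
    · rintro (⟨k, hk, hrk⟩ | ⟨k, hk, hrk⟩)
      · exact ⟨k, hk, Or.inl hrk⟩
      · exact ⟨k, hk, Or.inr hrk⟩
  -- Af ∩ Bf
  have hABset : Af ∩ Bf = Bx (fun q => cf n (M (s+1)) q - 1) ∩ Bx (cf n (M 1)) := by
    apply Finset.Subset.antisymm
    · intro r hr
      rw [Finset.mem_inter] at hr
      obtain ⟨a, ha, hra⟩ := Finset.mem_biUnion.1 hr.1
      obtain ⟨b, hb, hrb⟩ := Finset.mem_biUnion.1 hr.2
      rw [Finset.mem_Icc] at ha hb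
      rw [mem_Bx] at hra hrb
      rw [Finset.mem_inter, mem_Bx, mem_Bx]
      constructor <;> intro q
      · have h1 := hra q; have h2 := hrb q
        have b1 := hchainA a (s+1) ha.1 (by omega) (by omega) q
        have b2 := hchainA b (s+1) hb.1 (by omega) (by omega) q
        omega
      · have h1 := hra q; have h2 := hrb q
        have b1 := hchainA 1 a (by omega) ha.1 (by omega) q
        have b2 := hchainA 1 b (by omega) hb.1 (by omega) q
        omega
    · intro r hr
      rw [Finset.mem_inter] at hr
      rw [Finset.mem_inter]
      constructor
      · exact Finset.mem_biUnion.2 ⟨1, Finset.mem_Icc.2 ⟨le_rfl, by omega⟩, hr.2⟩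
      · exact Finset.mem_biUnion.2 ⟨s+1, Finset.mem_Icc.2 ⟨by omega, le_rfl⟩, hr.1⟩
  have hMs1 : M (s+1) = n + 1 := by simp only [hM]; rw [if_neg (by omega)]
  have hcftop : ∀ q : Fin n, cf n (M (s+1)) q = 0 := by
    intro q; rw [hMs1]; simp only [cf]; rw [if_pos (by omega)]
  have hABcard : (Bx (fun q => cf n (M (s+1)) q - 1) ∩ Bx (cf n (M 1))).card
      = 2 ^ (n + 1 - M 1) := by
    rw [card_Bx_inter _ _ (fun q => by
      have h1 := hcftop q
      have h2 : cf n (M 1) q = 0 ∨ cf n (M 1) q = -1 := by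
        simp only [cf]; split_ifs <;> simp
      constructor <;> omega)]
    have hfe : (Finset.univ.filter fun q : Fin n => cf n (M (s+1)) q - 1 = cf n (M 1) q)
        = Finset.univ.filter fun q : Fin n => cf n (M 1) q = -1 := by
      apply Finset.filter_congr; intro q _
      have := hcftop q
      constructor <;> intro h <;> omega
    rw [hfe, cf_neg_count (M 1) (M1 1 le_rfl) (Mle 1)]
  have hcup := Finset.card_union_add_card_inter Af Bf
  rw [hABset, hABcard] at hcup
  -- KEY numeric identity
  have KEY : (∑ i ∈ Finset.Icc 1 s, 2 ^ (n + 1 - (w i - w (i - 1)))) + 2 ^ (w s)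
      = 2 * SA + 2 ^ (n + 1 - M 1) := by
    rcases Nat.eq_zero_or_pos s with rfl | hs
    · simp only [hSA]
      rw [show Finset.Icc 1 0 = (∅ : Finset ℕ) from rfl]
      rw [show Finset.Ico 1 (0+1) = (∅ : Finset ℕ) from rfl]
      simp [hM, h0]
    · have hM1 : M 1 = w 1 := by
        simp only [hM]
        rw [if_pos (show 1 ≤ s from hs)]
      have hMs : M s = w s := by simp only [hM]; rw [if_pos le_rfl]
      have hws1 : 1 ≤ w s := le_trans (w1pos hs) (wm 1 s hs le_rfl)
      -- split SA
      have hSAsplit : SA = (∑ j ∈ Finset.Ico 1 s, 2 ^ (n - (M (j+1) - M j)))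
          + 2 ^ (n - (M (s+1) - M s)) := by
        rw [hSA, Finset.sum_Ico_succ_top hs]
      have hlast : 2 ^ (n - (M (s+1) - M s)) = 2 ^ (w s - 1) := by
        rw [hMs1, hMs]; congr 1; omega
      -- split T at the bottom
      have hT : Finset.Icc 1 s = insert 1 (Finset.Icc 2 s) := by
        ext x; simp only [Finset.mem_Icc, Finset.mem_insert]; omega
      have hTsum : (∑ i ∈ Finset.Icc 1 s, 2 ^ (n + 1 - (w i - w (i - 1))))
          = 2 ^ (n + 1 - w 1) + ∑ j ∈ Finset.Ico 1 s, 2 ^ (n + 1 - (w (j+1) - w j)) := by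
        rw [hT, Finset.sum_insert (by simp)]
        congr 1
        · have h11 : (1:ℕ) - 1 = 0 := rfl
          rw [h11, h0, Nat.sub_zero]
        · refine Finset.sum_bij' (i := fun a _ => a - 1) (j := fun b _ => b + 1)
            (hi := fun a ha => ?_) (hj := fun b hb => ?_) (left_neg := fun a ha => ?_)
            (right_neg := fun b hb => ?_) (h := fun a ha => ?_)
          · have ha' := Finset.mem_Icc.mp ha
            exact Finset.mem_Ico.mpr (by omega)
          · have hb' := Finset.mem_Ico.mp hb
            exact Finset.mem_Icc.mpr (by omega)
          · have ha' := Finset.mem_Icc.mp ha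
            omega
          · omega
          · have ha' := Finset.mem_Icc.mp ha
            have hrw : a - 1 + 1 = a := by omega
            rw [hrw]
      -- now combine
      have h2SA : 2 * SA = (∑ j ∈ Finset.Ico 1 s, 2 ^ (n + 1 - (w (j+1) - w j))) + 2 ^ (w s) := by
        rw [hSAsplit, hlast, Nat.mul_add]
        congr 1
        · rw [Finset.mul_sum]
          apply Finset.sum_congr rfl
          intro j hj
          rw [Finset.mem_Ico] at hj
          have e1 : M (j+1) = w (j+1) := by simp only [hM]; rw [if_pos (by omega)]
          have e2 : M j = w j := by simp only [hM]; rw [if_pos (by omega)]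
          have e3 : w (j+1) ≤ n := le_trans (wm (j+1) s (by omega) le_rfl) hws
          have e4 : w j < w (j+1) := hmono j hj.2
          have e5 : n + 1 - (w (j+1) - w j) = n - (M (j+1) - M j) + 1 := by
            rw [e1, e2]; omega
          rw [e5, pow_succ, mul_comm]
        · have h6 : (2:ℕ) * 2 ^ (w s - 1) = 2 ^ (w s - 1 + 1) := (pow_succ' 2 _).symm
          rw [h6]
          congr 1
          omega
      rw [hTsum, h2SA, hM1]
      omega
  -- final arithmetic
  rw [hUAB]
  have htarget : (Af ∪ Bf).card
      + ((∑ i ∈ Finset.Icc 1 s, 2 ^ (n + 1 - (w i - w (i - 1)))) + 2 ^ (w s))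
      = (s+1) * 2 ^ (n+1) := by
    have hr1 : (s+1) * 2 ^ (n+1) = 2 * ((s+1) * 2 ^ n) := by ring
    omega
  have hcast := congrArg (Nat.cast : ℕ → ℤ) htarget
  push_cast at hcast
  linarith


noncomputable def iota (n : ℕ) (r : Fin n → ℤ) : Fin (n + 1) → ℝ :=
  (2⁻¹ : ℝ) • pH n (Fin.cons 0 fun q => (r q : ℝ))

lemma pH_add (n : ℕ) (u v : Fin (n + 1) → ℝ) : pH n (u + v) = pH n u + pH n v := by
  funext i
  simp only [pH, Pi.add_apply, Finset.sum_add_distrib]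
  ring

lemma pH_const (n : ℕ) (t : ℝ) : pH n (fun _ => t) = 0 := by
  funext i
  have h : ((n : ℝ) + 1) ≠ 0 := by positivity
  simp only [pH, Finset.sum_const, Finset.card_univ, Fintype.card_fin, nsmul_eq_mul,
    Pi.zero_apply]
  push_cast
  field_simp
  ring

lemma pH_zero (n : ℕ) : pH n 0 = 0 := pH_const n 0

lemma pH_shift (n : ℕ) (v : Fin (n + 1) → ℝ) (t : ℝ) :
    pH n (fun j => v j + t) = pH n v := by
  have h : (fun j => v j + t) = v + fun _ => t := rfl
  rw [h, pH_add, pH_const, add_zero]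

lemma iota_inj (n : ℕ) : Function.Injective (iota n) := by
  intro r r' h
  have h2 : pH n (Fin.cons 0 fun q => (r q : ℝ)) = pH n (Fin.cons 0 fun q => (r' q : ℝ)) := by
    have h3 := congrArg (fun f => (2 : ℝ) • f) h
    simp only [iota, smul_smul] at h3
    norm_num at h3
    exact h3
  funext q
  have h0 := congrFun h2 0
  have hq := congrFun h2 q.succ
  simp only [pH, Fin.cons_zero] at h0
  simp only [pH, Fin.cons_succ] at hq
  have : (r q : ℝ) = r' q := by linarith
  exact_mod_cast this

lemma mem_gens (n : ℕ) (g : Fin (n + 1) → ℝ) :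
    g ∈ ({0} ∪ (2⁻¹ : ℝ) • VPAn n : Set (Fin (n + 1) → ℝ)) ↔
      ∃ u : Fin (n + 1) → ℝ, (∀ j, u j = 0 ∨ u j = 1) ∧ g = (2⁻¹ : ℝ) • pH n u := by
  constructor
  · rintro (hg | hg)
    · refine ⟨0, fun j => Or.inl rfl, ?_⟩
      rw [Set.mem_singleton_iff] at hg
      rw [hg, pH_zero, smul_zero]
    · obtain ⟨x, hx, rfl⟩ := hg
      obtain ⟨u, hu, rfl⟩ := hx
      exact ⟨u, hu.1, rfl⟩
  · rintro ⟨u, hu, rfl⟩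
    by_cases h1 : u = 0
    · left
      rw [Set.mem_singleton_iff, h1, pH_zero, smul_zero]
    by_cases h2 : u = fun _ => 1
    · left
      rw [Set.mem_singleton_iff, h2, pH_const, smul_zero]
    · right
      exact ⟨pH n u, ⟨u, ⟨hu, h1, h2⟩, rfl⟩, rfl⟩

lemma uvec_zero_fun (n : ℕ) : uvec n 0 = fun _ => (0 : ℝ) := by
  funext j; simp [uvec]

lemma master (n W m : ℕ) (hWm : (1 ≤ W ∧ m = W) ∨ (W = 0 ∧ m = n + 1))
    (u : Fin (n + 1) → ℝ) (r : Fin n → ℤ) (β : ℤ)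
    (hu0 : u 0 = (β : ℝ))
    (hur : ∀ q : Fin n, u q.succ = ((r q - (cf n m q - β) : ℤ) : ℝ)) :
    (2⁻¹ : ℝ) • pH n (uvec n W) + (2⁻¹ : ℝ) • pH n u = iota n r := by
  have huvec : ∀ q : Fin n, uvec n W q.succ = uvec n W 0 + ((cf n m q : ℤ) : ℝ) := by
    intro q
    have hv : ((q.succ : Fin (n+1)) : ℕ) = (q : ℕ) + 1 := Fin.val_succ q
    rcases hWm with ⟨hW1, hm⟩ | ⟨hW0, hm⟩ <;> rw [hm]
    · simp only [uvec, cf, hv]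
      rw [if_pos (show ((0 : Fin (n+1)) : ℕ) < W by simp; omega)]
      split_ifs <;> norm_num
    · simp only [uvec, cf, hv, hW0]
      rw [if_neg (by omega), if_neg (by omega), if_pos (by omega)]
      norm_num
  have hsum : uvec n W + u
      = fun j => ((Fin.cons (0 : ℝ) (fun q => (r q : ℝ)) : Fin (n+1) → ℝ) j
        + (uvec n W 0 + (β : ℝ))) := by
    funext j
    refine Fin.cases ?_ ?_ j
    · simp only [Pi.add_apply, Fin.cons_zero, hu0]
      ring
    · intro q
      have h1 := huvec q
      have h2 := hur q
      simp only [Pi.add_apply, Fin.cons_succ, h1, h2]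
      push_cast
      ring
  rw [← smul_add, ← pH_add, hsum, pH_shift, iota]

lemma fwd (n W m : ℕ) (hWm : (1 ≤ W ∧ m = W) ∨ (W = 0 ∧ m = n + 1))
    (u : Fin (n + 1) → ℝ) (hu : ∀ j, u j = 0 ∨ u j = 1) :
    ∃ r : Fin n → ℤ, (r ∈ Bx (cf n m) ∪ Bx (fun q => cf n m q - 1)) ∧
      (2⁻¹ : ℝ) • pH n (uvec n W) + (2⁻¹ : ℝ) • pH n u = iota n r := by
  classical
  refine ⟨fun q => cf n m q - (if u 0 = 1 then 1 else 0)
      + (if u q.succ = 1 then 1 else 0), ?_, ?_⟩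
  · rcases hu 0 with h | h
    · apply Finset.mem_union_left
      rw [mem_Bx]
      intro q
      rw [if_neg (show ¬ u 0 = 1 by rw [h]; norm_num)]
      rcases hu q.succ with h2 | h2
      · left; rw [if_neg (show ¬ u q.succ = 1 by rw [h2]; norm_num)]; try ring
      · right; rw [if_pos h2]; try ring
    · apply Finset.mem_union_right
      rw [mem_Bx]
      intro q
      rw [if_pos h]
      rcases hu q.succ with h2 | h2
      · left; rw [if_neg (show ¬ u q.succ = 1 by rw [h2]; norm_num)]; try ring
      · right; rw [if_pos h2]; try ring
  · have hu0 : u 0 = (((if u 0 = 1 then 1 else 0) : ℤ) : ℝ) := by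
      rcases hu 0 with h | h
      · rw [if_neg (show ¬ u 0 = 1 by rw [h]; norm_num), h]; norm_num
      · rw [if_pos h, h]; norm_num
    refine master n W m hWm u _ _ hu0 ?_
    intro q
    rcases hu q.succ with h | h
    · rw [if_neg (show ¬ u q.succ = 1 by rw [h]; norm_num), h]
      push_cast
      ring
    · rw [if_pos h, h]
      push_cast
      ring

lemma bwd (n W m : ℕ) (hWm : (1 ≤ W ∧ m = W) ∨ (W = 0 ∧ m = n + 1))
    (r : Fin n → ℤ)
    (hr : r ∈ Bx (cf n m) ∪ Bx (fun q => cf n m q - 1)) :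
    ∃ u : Fin (n + 1) → ℝ, (∀ j, u j = 0 ∨ u j = 1) ∧
      (2⁻¹ : ℝ) • pH n (uvec n W) + (2⁻¹ : ℝ) • pH n u = iota n r := by
  rcases Finset.mem_union.mp hr with h | h
  · rw [mem_Bx] at h
    refine ⟨Fin.cons (0 : ℝ) (fun q => ((r q - cf n m q : ℤ) : ℝ)), ?_, ?_⟩
    · intro j
      refine Fin.cases ?_ ?_ j
      · left; simp
      · intro q
        rcases h q with h2 | h2
        · left; simp [Fin.cons_succ, h2]
        · right; simp [Fin.cons_succ, h2]
    · refine master n W m hWm _ r 0 (by simp) ?_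
      intro q
      simp [Fin.cons_succ]
  · rw [mem_Bx] at h
    refine ⟨Fin.cons (1 : ℝ) (fun q => ((r q - (cf n m q - 1) : ℤ) : ℝ)), ?_, ?_⟩
    · intro j
      refine Fin.cases ?_ ?_ j
      · right; simp
      · intro q
        rcases h q with h2 | h2
        · left
          simp only [Fin.cons_succ]
          have h3 : r q - (cf n m q - 1) = 0 := by omega
          rw [h3]; norm_num
        · right
          simp only [Fin.cons_succ]
          have h3 : r q - (cf n m q - 1) = 1 := by omega
          rw [h3]; norm_num
    · refine master n W m hWm _ r 1 (by simp) ?_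
      intro q
      simp [Fin.cons_succ]

lemma NC_eq (n s : ℕ) (w : ℕ → ℕ) (h0 : w 0 = 0)
    (hmono : ∀ i, i < s → w i < w (i + 1)) (hws : w s ≤ n) :
    (insert (0 : Fin (n + 1) → ℝ)
        ((fun i => (2⁻¹ : ℝ) • pH n (uvec n (w i))) '' Set.Icc 1 s)
      + ({0} ∪ (2⁻¹ : ℝ) • VPAn n))
    = iota n '' ((((Finset.Icc 1 (s+1)).biUnion fun k =>
        Bx (cf n (if k ≤ s then w k else n + 1)) ∪
        Bx (fun q => cf n (if k ≤ s then w k else n + 1) q - 1)) :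
          Finset (Fin n → ℤ)) : Set (Fin n → ℤ)) := by
  have key : ∀ d a, a + d ≤ s → w a ≤ w (a + d) := by
    intro d
    induction d with
    | zero => intro a _; simp
    | succ d ih =>
      intro a h
      have h1 := ih a (by omega)
      have h2 := hmono (a + d) (by omega)
      have hh : a + (d + 1) = (a + d) + 1 := by omega
      rw [hh]; omega
  have wm : ∀ a b, a ≤ b → b ≤ s → w a ≤ w b := by
    intro a b hab hbs
    have := key (b - a) a (by omega)
    have hh : a + (b - a) = b := by omega
    rwa [hh] at this
  have wpos : ∀ i, 1 ≤ i → i ≤ s → 1 ≤ w i := by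
    intro i hi his
    have h2 := hmono 0 (by omega)
    norm_num at h2
    have := wm 1 i hi his
    omega
  ext x
  constructor
  · intro hx
    obtain ⟨c, hc, g, hg, hcg⟩ := Set.mem_add.mp hx
    obtain ⟨u, hu, rfl⟩ := (mem_gens n g).mp hg
    have hci : ∃ i, (i = 0 ∨ (1 ≤ i ∧ i ≤ s)) ∧
        c = (2⁻¹ : ℝ) • pH n (uvec n (w i)) := by
      rcases Set.mem_insert_iff.mp hc with rfl | hc2
      · refine ⟨0, Or.inl rfl, ?_⟩
        rw [h0, uvec_zero_fun, pH_const, smul_zero]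
      · obtain ⟨i, hi, hi2⟩ := hc2
        rw [Set.mem_Icc] at hi
        exact ⟨i, Or.inr hi, hi2.symm⟩
    obtain ⟨i, hi, rfl⟩ := hci
    have hk : ∃ k, 1 ≤ k ∧ k ≤ s + 1 ∧
        ((1 ≤ w i ∧ (if k ≤ s then w k else n + 1) = w i) ∨
         (w i = 0 ∧ (if k ≤ s then w k else n + 1) = n + 1)) := by
      rcases hi with rfl | ⟨h1, h2⟩
      · exact ⟨s + 1, by omega, le_rfl, Or.inr ⟨h0, if_neg (by omega)⟩⟩
      · exact ⟨i, h1, by omega, Or.inl ⟨wpos i h1 h2, by rw [if_pos h2]⟩⟩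
    obtain ⟨k, hk1, hk2, hWm⟩ := hk
    obtain ⟨r, hrmem, heq⟩ := fwd n (w i) (if k ≤ s then w k else n + 1)
      (by rcases hWm with ⟨a, b⟩ | ⟨a, b⟩; exacts [Or.inl ⟨a, b⟩, Or.inr ⟨a, b⟩]) u hu
    refine ⟨r, ?_, ?_⟩
    · rw [Finset.mem_coe, Finset.mem_biUnion]
      exact ⟨k, Finset.mem_Icc.mpr ⟨hk1, hk2⟩, hrmem⟩
    · rw [← hcg]
      exact heq.symm
  · rintro ⟨r, hr, rfl⟩
    rw [Finset.mem_coe, Finset.mem_biUnion] at hr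
    obtain ⟨k, hk, hrk⟩ := hr
    rw [Finset.mem_Icc] at hk
    have hi : ∃ i, ((1 ≤ w i ∧ (if k ≤ s then w k else n + 1) = w i) ∨
        (w i = 0 ∧ (if k ≤ s then w k else n + 1) = n + 1)) ∧
        ((2⁻¹ : ℝ) • pH n (uvec n (w i)) ∈ insert (0 : Fin (n + 1) → ℝ)
          ((fun i => (2⁻¹ : ℝ) • pH n (uvec n (w i))) '' Set.Icc 1 s)) := by
      by_cases hks : k ≤ s
      · refine ⟨k, Or.inl ⟨wpos k hk.1 hks, if_pos hks⟩, ?_⟩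
        exact Set.mem_insert_iff.mpr (Or.inr ⟨k, Set.mem_Icc.mpr ⟨hk.1, hks⟩, rfl⟩)
      · refine ⟨0, Or.inr ⟨h0, if_neg hks⟩, ?_⟩
        rw [h0, uvec_zero_fun, pH_const, smul_zero]
        exact Set.mem_insert _ _
    obtain ⟨i, hWm, hCmem⟩ := hi
    obtain ⟨u, hubits, heq⟩ := bwd n (w i) (if k ≤ s then w k else n + 1) hWm r hrk
    rw [Set.mem_add]
    exact ⟨_, hCmem, (2⁻¹ : ℝ) • pH n u, (mem_gens n _).mpr ⟨u, hubits, rfl⟩, heq⟩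


end CliqueAux

theorem clique_neighborhood_count_An (n s : ℕ) (w : ℕ → ℕ)
    (h0 : w 0 = 0) (hmono : ∀ i, i < s → w i < w (i + 1)) (hws : w s ≤ n)
    (C NC : Set (Fin (n + 1) → ℝ))
    (hC : C = insert (0 : Fin (n + 1) → ℝ)
      ((fun i => (2⁻¹ : ℝ) • pH n (uvec n (w i))) '' Set.Icc 1 s))
    (hNC : NC = C + ({0} ∪ (2⁻¹ : ℝ) • VPAn n)) :
    (NC.ncard : ℤ) = ((s : ℤ) + 1) * 2 ^ (n + 1)
        - ((∑ i ∈ Finset.Icc 1 s, (2 : ℤ) ^ (n + 1 - (w i - w (i - 1)))) + 2 ^ (w s)) ∧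
    (C.ncard : ℝ) / (NC.ncard : ℝ) ≤ 1 / 2 ^ n := by
  classical
  have hNCeq : NC = CliqueAux.iota n ''
      ((((Finset.Icc 1 (s+1)).biUnion fun k =>
        CliqueAux.Bx (CliqueAux.cf n (if k ≤ s then w k else n + 1)) ∪
        CliqueAux.Bx (fun q => CliqueAux.cf n (if k ≤ s then w k else n + 1) q - 1)) :
          Finset (Fin n → ℤ)) : Set (Fin n → ℤ)) := by
    rw [hNC, hC]
    exact CliqueAux.NC_eq n s w h0 hmono hws
  have hNCcard : (NC.ncard : ℤ) = ((s : ℤ) + 1) * 2 ^ (n + 1)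
      - ((∑ i ∈ Finset.Icc 1 s, (2 : ℤ) ^ (n + 1 - (w i - w (i - 1)))) + 2 ^ (w s)) := by
    rw [hNCeq, Set.ncard_image_of_injective _ (CliqueAux.iota_inj n),
      Set.ncard_coe_finset]
    exact CliqueAux.count_main n s w h0 hmono hws
  refine ⟨hNCcard, ?_⟩
  have hterm : ∀ i ∈ Finset.Icc 1 s, (2:ℤ) ^ (n + 1 - (w i - w (i - 1))) ≤ 2 ^ n := by
    intro i hi
    rw [Finset.mem_Icc] at hi
    have hlt : w (i - 1) < w i := by
      have h2 := hmono (i - 1) (by omega)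
      have h3 : i - 1 + 1 = i := by omega
      rw [h3] at h2
      exact h2
    apply pow_le_pow_right₀ (by norm_num)
    omega
  have hsum_le : (∑ i ∈ Finset.Icc 1 s, (2:ℤ) ^ (n + 1 - (w i - w (i - 1)))) ≤ (s:ℤ) * 2 ^ n := by
    calc (∑ i ∈ Finset.Icc 1 s, (2:ℤ) ^ (n + 1 - (w i - w (i - 1))))
        ≤ ∑ _i ∈ Finset.Icc 1 s, (2:ℤ) ^ n := Finset.sum_le_sum hterm
      _ = (s:ℤ) * 2 ^ n := by
          rw [Finset.sum_const, Nat.card_Icc]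
          simp [nsmul_eq_mul]
  have h2ws : (2:ℤ) ^ (w s) ≤ 2 ^ n := pow_le_pow_right₀ (by norm_num) hws
  have hlow : ((s:ℤ) + 1) * 2 ^ n ≤ (NC.ncard : ℤ) := by
    rw [hNCcard]
    have hr : ((s:ℤ) + 1) * 2 ^ (n+1) = ((s:ℤ) + 1) * 2 ^ n + ((s:ℤ) * 2 ^ n + 2 ^ n) := by
      ring
    linarith
  have hC_le : (C.ncard : ℤ) ≤ (s:ℤ) + 1 := by
    rw [hC]
    have h1 := Set.ncard_insert_le (0 : Fin (n + 1) → ℝ)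
      ((fun i => (2⁻¹ : ℝ) • pH n (uvec n (w i))) '' Set.Icc 1 s)
    have h2 := Set.ncard_image_le (f := fun i => (2⁻¹ : ℝ) • pH n (uvec n (w i)))
      (s := Set.Icc 1 s) (Set.finite_Icc 1 s)
    have h3 : (Set.Icc 1 s).ncard = s := by
      rw [← Finset.coe_Icc, Set.ncard_coe_finset, Nat.card_Icc]
      omega
    have h4 : (insert (0 : Fin (n + 1) → ℝ)
        ((fun i => (2⁻¹ : ℝ) • pH n (uvec n (w i))) '' Set.Icc 1 s)).ncard ≤ s + 1 := by
      omega
    exact_mod_cast h4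
  have hN0 : (0:ℝ) < (NC.ncard : ℝ) := by
    have h5 : (0:ℤ) < ((s:ℤ) + 1) * 2 ^ n := by positivity
    have h6 : (0:ℤ) < (NC.ncard : ℤ) := lt_of_lt_of_le h5 hlow
    exact_mod_cast h6
  rw [div_le_div_iff₀ hN0 (by positivity)]
  have hCr : (C.ncard : ℝ) ≤ (s:ℝ) + 1 := by exact_mod_cast hC_le
  have hNr : ((s:ℝ) + 1) * 2 ^ n ≤ (NC.ncard : ℝ) := by exact_mod_cast hlow
  have h2n : (0:ℝ) ≤ 2 ^ n := by positivity
  have hmul := mul_le_mul_of_nonneg_right hCr h2n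
  linarith
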